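/- Let M ∈ (ℂ[τ])^{m×n} be a polynomial matrix. If the rank of the evaluated matrix M(t) is not constant as t ranges over ℂ, then the quotient ℂ[τ]-module ℂ[τ]^{1×n}/⟨M⟩ has a nontrivial torsion element; i.e., there exist m ∈ ℂ[τ]^{1×n} with m ∉ ⟨M⟩ and a nonzero polynomial p ∈ ℂ[τ] with p·m ∈ ⟨M⟩. -/

import Mathlib

open Polynomial Matrix

/-- The row module of a polynomial matrix. -/
noncomputable def rowModule {m n : ℕ} (M : Matrix (Fin m) (Fin n) ℂ[X]) :
    Submodule ℂ[X] (Fin n → ℂ[X]) :=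
  Submodule.span ℂ[X] (Set.range fun i => M i)

theorem stmt1 {m n : ℕ} (M : Matrix (Fin m) (Fin n) ℂ[X])
    (hrank : ¬ ∃ r : ℕ, ∀ t : ℂ, (M.map (Polynomial.eval t)).rank = r) :
    ∃ (m₀ : Fin n → ℂ[X]) (p : ℂ[X]),
      m₀ ∉ rowModule M ∧ p ≠ 0 ∧ p • m₀ ∈ rowModule M := by
  classical
  set N : Submodule ℂ[X] (Fin n → ℂ[X]) := rowModule M with hNdef
  obtain ⟨n₀, snf⟩ := N.smithNormalForm (Pi.basisFun ℂ[X] (Fin n))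
  by_cases hu : ∀ i, IsUnit (snf.a i)
  · exfalso
    apply hrank
    refine ⟨n₀, fun t => ?_⟩
    -- the evaluation map, as a ring hom on row vectors
    set ev : (Fin n → ℂ[X]) →+* (Fin n → ℂ) :=
      Pi.ringHom (fun k => (evalRingHom t).comp (Pi.evalRingHom _ k)) with hevdef
    have hev_smul : ∀ (p : ℂ[X]) (v : Fin n → ℂ[X]), ev (p • v) = p.eval t • ev v := by
      intro p v; funext k
      show Polynomial.eval t ((p • v) k) = Polynomial.eval t p * Polynomial.eval t (v k)
      simp [hevdef, Pi.smul_apply, smul_eq_mul]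
    -- the row space of the evaluated matrix
    set W : Submodule ℂ (Fin n → ℂ) :=
      Submodule.span ℂ (Set.range (M.map (Polynomial.eval t))) with hWdef
    -- every element of N evaluates into W
    have hmemW : ∀ v ∈ N, ev v ∈ W := by
      intro v hv
      have hv' : v ∈ Submodule.span ℂ[X] (Set.range fun i => M i) := hv
      refine Submodule.span_induction ?_ ?_ ?_ ?_ hv'
      · rintro x ⟨i, rfl⟩
        refine Submodule.subset_span ⟨i, ?_⟩
        funext k; rfl
      · simp
      · intro x y _ _ hx hy
        rw [map_add]; exact add_mem hx hy
      · intro p x _ hx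
        rw [hev_smul]; exact Submodule.smul_mem _ _ hx
    -- conversely every evaluated element of N is in the span of evaluated bN
    set g : Fin n₀ → (Fin n → ℂ) := fun j => ev (snf.bN j) with hgdef
    have hmemG : ∀ v ∈ N, ev v ∈ Submodule.span ℂ (Set.range g) := by
      intro v hv
      obtain ⟨c, rfl⟩ := snf.bN.mem_submodule_iff'.mp hv
      rw [map_sum]
      refine Submodule.sum_mem _ fun j _ => ?_
      rw [hev_smul]
      exact Submodule.smul_mem _ _ (Submodule.subset_span ⟨j, rfl⟩)
    -- so W = span of g
    have hWg : W = Submodule.span ℂ (Set.range g) := by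
      apply le_antisymm
      · rw [hWdef, Submodule.span_le]
        rintro x ⟨i, rfl⟩
        have hi : (M i) ∈ N := Submodule.subset_span ⟨i, rfl⟩
        have h2 := hmemG _ hi
        exact h2
      · rw [Submodule.span_le]
        rintro x ⟨j, rfl⟩
        exact hmemW _ (snf.bN j).2
    -- the evaluated basis bM is linearly independent over ℂ
    set P : Matrix (Fin n) (Fin n) ℂ[X] := Matrix.of fun i j => snf.bM i j with hPdef
    have hPT : (Pi.basisFun ℂ[X] (Fin n)).toMatrix snf.bM = Pᵀ := by
      ext i j
      simp [Module.Basis.toMatrix_apply, hPdef]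
    have hdetP : IsUnit P.det := by
      haveI := (Pi.basisFun ℂ[X] (Fin n)).invertibleToMatrix snf.bM
      have h1 : IsUnit ((Pi.basisFun ℂ[X] (Fin n)).toMatrix snf.bM).det :=
        Matrix.isUnit_det_of_invertible _
      rw [hPT, Matrix.det_transpose] at h1
      exact h1
    have hdetPt : IsUnit (P.map (Polynomial.eval t)).det := by
      have : (P.map (Polynomial.eval t)).det = Polynomial.eval t P.det := by
        have := (evalRingHom t).map_det P
        simpa [RingHom.mapMatrix_apply] using this.symm
      rw [this]
      exact hdetP.map (evalRingHom t)
    have hH : LinearIndependent ℂ (fun i => (P.map (Polynomial.eval t)) i) :=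
      Matrix.linearIndependent_rows_iff_isUnit.mpr ((Matrix.isUnit_iff_isUnit_det _).mpr hdetPt)
    have hHev : (fun i => (P.map (Polynomial.eval t)) i) = fun i => ev (snf.bM i) := by
      funext i; funext k; rfl
    rw [hHev] at hH
    -- the subfamily indexed by f is linearly independent
    have hHf : LinearIndependent ℂ (fun j : Fin n₀ => ev (snf.bM (snf.f j))) :=
      hH.comp snf.f snf.f.injective
    -- g is a unit rescaling of that subfamily
    have hwne : ∀ j, (snf.a j).eval t ≠ 0 := fun j =>
      ((hu j).map (evalRingHom t)).ne_zero
    set w : Fin n₀ → ℂˣ := fun j => Units.mk0 _ (hwne j) with hwdef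
    have hgw : g = w • (fun j : Fin n₀ => ev (snf.bM (snf.f j))) := by
      funext j
      rw [hgdef]
      have : (snf.bN j : Fin n → ℂ[X]) = snf.a j • snf.bM (snf.f j) := snf.snf j
      simp only [this, hev_smul]
      rfl
    have hgind : LinearIndependent ℂ g := by
      rw [hgw]; exact hHf.units_smul w
    -- conclude
    rw [Matrix.rank_eq_finrank_span_row]
    change Module.finrank ℂ (Submodule.span ℂ (Set.range (M.map (Polynomial.eval t)))) = n₀
    rw [← hWdef, hWg, finrank_span_eq_card hgind,
      Fintype.card_fin]
  · push_neg at hu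
    obtain ⟨i, hi⟩ := hu
    refine ⟨snf.bM (snf.f i), snf.a i, ?_, ?_, ?_⟩
    · intro h
      have h1 := snf.repr_apply_embedding_eq_repr_smul
        (⟨snf.bM (snf.f i), h⟩ : N) (i := i)
      simp only [Module.Basis.repr_self, Finsupp.single_eq_same, _root_.map_smul,
        Finsupp.smul_apply, smul_eq_mul] at h1
      exact hi (IsUnit.of_mul_eq_one _ h1.symm)
    · intro ha
      have h0 : (snf.bN i : Fin n → ℂ[X]) = 0 := by
        rw [snf.snf i, ha, zero_smul]
      exact snf.bN.ne_zero i (Subtype.ext h0)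
    · rw [← snf.snf i]
      exact (snf.bN i).2
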